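/- arXiv:1611.01429 — 9 statements merged into one kernel-verified Lean document; each statement's English description precedes it below -/
import Mathlib

section
/- For every formula φ ∈ Fm, ⊢_{EL3⁻} □φ ↔ (φ ≡ ⊤). -/
/-- Formulas of the modal-epistemic language: variables, ⊥, ∧, ∨, →, □, K. -/
inductive Fm : Type
  | var : ℕ → Fm
  | bot : Fm
  | and : Fm → Fm → Fm
  | or : Fm → Fm → Fm
  | imp : Fm → Fm → Fm
  | box : Fm → Fm
  | k : Fm → Fm
  deriving DecidableEq

namespace Fm

/-- ¬φ := φ → ⊥ -/
def neg (φ : Fm) : Fm := φ.imp .bot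

/-- ⊤ := ¬⊥ -/
def top : Fm := neg .bot

/-- φ ↔ ψ := (φ→ψ) ∧ (ψ→φ) -/
def iff (φ ψ : Fm) : Fm := (φ.imp ψ).and (ψ.imp φ)

/-- Propositional identity φ ≡ ψ := □(φ→ψ) ∧ □(ψ→φ). -/
def ident (φ ψ : Fm) : Fm := ((φ.imp ψ).box).and ((ψ.imp φ).box)

/-- Substitution of `σ` for every occurrence of the variable `x`. -/
def subst (x : ℕ) (σ : Fm) : Fm → Fm
  | var n => if n = x then σ else var n
  | bot => bot
  | and a b => and (subst x σ a) (subst x σ b)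
  | or a b => or (subst x σ a) (subst x σ b)
  | imp a b => imp (subst x σ a) (subst x σ b)
  | box a => box (subst x σ a)
  | k a => k (subst x σ a)

/-- Propositional formulas (the set Fm₀): neither □ nor K occurs. -/
def IsProp : Fm → Prop
  | var _ => True
  | bot => True
  | and a b => a.IsProp ∧ b.IsProp
  | or a b => a.IsProp ∧ b.IsProp
  | imp a b => a.IsProp ∧ b.IsProp
  | box _ => False
  | k _ => False

end Fm

/-- Hilbert-style axiom schemes of intuitionistic propositional logic, with
schematic letters ranging over all formulas of `Fm` (so the derivable formulas
are exactly the substitution instances of IPC theorems). -/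
inductive IntAx : Fm → Prop
  | k (φ ψ : Fm) : IntAx (φ.imp (ψ.imp φ))
  | s (φ ψ χ : Fm) : IntAx ((φ.imp (ψ.imp χ)).imp ((φ.imp ψ).imp (φ.imp χ)))
  | andIntro (φ ψ : Fm) : IntAx (φ.imp (ψ.imp (φ.and ψ)))
  | andLeft (φ ψ : Fm) : IntAx ((φ.and ψ).imp φ)
  | andRight (φ ψ : Fm) : IntAx ((φ.and ψ).imp ψ)
  | orInl (φ ψ : Fm) : IntAx (φ.imp (φ.or ψ))
  | orInr (φ ψ : Fm) : IntAx (ψ.imp (φ.or ψ))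
  | orElim (φ ψ χ : Fm) : IntAx ((φ.imp χ).imp ((ψ.imp χ).imp ((φ.or ψ).imp χ)))
  | exfalso (φ : Fm) : IntAx (Fm.bot.imp φ)

/-- Derivability in intuitionistic propositional calculus from hypotheses `Φ`
(Hilbert style, Modus Ponens as the only rule). -/
inductive IPC (Φ : Set Fm) : Fm → Prop
  | hyp {φ} : φ ∈ Φ → IPC Φ φ
  | ax {φ} : IntAx φ → IPC Φ φ
  | mp {φ ψ} : IPC Φ (φ.imp ψ) → IPC Φ φ → IPC Φ ψ

/-- The modal logics L3, EL3⁻ (written `EL3m`), EL3, EL4, EL5. -/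
inductive ModalLogic : Type
  | L3 | EL3m | EL3 | EL4 | EL5
  deriving DecidableEq

/-- The axioms of the logic `L`:
(INT) all theorems of IPC and their substitution instances,
(A1) □(φ∨ψ)→(□φ∨□ψ), (A2) □φ→φ, (A3) □(φ→ψ)→□(□φ→□ψ);
(A7) □φ→□Kφ for the epistemic logics EL3⁻, EL3, EL4, EL5;
(A8) Kφ→¬¬φ for EL3, EL4, EL5; (A4) □φ→□□φ for EL4, EL5;
(A5) ¬□φ→□¬□φ for EL5. -/
inductive IsAxiom : ModalLogic → Fm → Prop
  | int {L : ModalLogic} {φ : Fm} : IPC ∅ φ → IsAxiom L φ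
  | a1 (L : ModalLogic) (φ ψ : Fm) :
      IsAxiom L (((φ.or ψ).box).imp ((φ.box).or (ψ.box)))
  | a2 (L : ModalLogic) (φ : Fm) : IsAxiom L ((φ.box).imp φ)
  | a3 (L : ModalLogic) (φ ψ : Fm) :
      IsAxiom L (((φ.imp ψ).box).imp (((φ.box).imp (ψ.box)).box))
  | a7 {L : ModalLogic} (φ : Fm) : L ≠ ModalLogic.L3 →
      IsAxiom L ((φ.box).imp ((φ.k).box))
  | a8 {L : ModalLogic} (φ : Fm) :
      L = ModalLogic.EL3 ∨ L = ModalLogic.EL4 ∨ L = ModalLogic.EL5 →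
      IsAxiom L ((φ.k).imp (φ.neg.neg))
  | a4 {L : ModalLogic} (φ : Fm) :
      L = ModalLogic.EL4 ∨ L = ModalLogic.EL5 →
      IsAxiom L ((φ.box).imp (φ.box.box))
  | a5 {L : ModalLogic} (φ : Fm) : L = ModalLogic.EL5 →
      IsAxiom L ((φ.box.neg).imp (φ.box.neg.box))

/-- Derivability from hypotheses `Φ` in logic `L`: hypotheses, axioms, the
theorem scheme (T) of tertium non datur, Modus Ponens, and Axiom Necessitation
(applicable only to axioms). -/
inductive Deriv (L : ModalLogic) (Φ : Set Fm) : Fm → Prop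
  | hyp {φ} : φ ∈ Φ → Deriv L Φ φ
  | ax {φ} : IsAxiom L φ → Deriv L Φ φ
  | tnd (φ : Fm) : Deriv L Φ (φ.or φ.neg)
  | mp {φ ψ} : Deriv L Φ (φ.imp ψ) → Deriv L Φ φ → Deriv L Φ ψ
  | an {φ} : IsAxiom L φ → Deriv L Φ (φ.box)

/-- ⊢_L φ : theoremhood in logic `L`. -/
def Thm (L : ModalLogic) (φ : Fm) : Prop := Deriv L ∅ φ

section Helpers

variable {L : ModalLogic} {Φ : Set Fm}

/-- Any IPC axiom is derivable. -/
lemma dax {φ : Fm} (h : IntAx φ) : Deriv L Φ φ :=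
  Deriv.ax (IsAxiom.int (IPC.ax h))

/-- Composition of implications. -/
lemma dtrans {a b c : Fm} (h1 : Deriv L Φ (a.imp b)) (h2 : Deriv L Φ (b.imp c)) :
    Deriv L Φ (a.imp c) :=
  Deriv.mp (Deriv.mp (dax (IntAx.s a b c))
    (Deriv.mp (dax (IntAx.k (b.imp c) a)) h2)) h1

/-- Weakening by an antecedent. -/
lemma dconst {a b : Fm} (hb : Deriv L Φ b) : Deriv L Φ (a.imp b) :=
  Deriv.mp (dax (IntAx.k b a)) hb

/-- Apply a derivable premise under an antecedent. -/
lemma dapp {a b c : Fm} (h : Deriv L Φ (a.imp (b.imp c))) (hb : Deriv L Φ b) :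
    Deriv L Φ (a.imp c) :=
  Deriv.mp (Deriv.mp (dax (IntAx.s a b c)) h) (dconst hb)

/-- Pairing under an antecedent. -/
lemma dpairImp {a x y : Fm} (hx : Deriv L Φ (a.imp x)) (hy : Deriv L Φ (a.imp y)) :
    Deriv L Φ (a.imp (x.and y)) :=
  Deriv.mp (Deriv.mp (dax (IntAx.s a y (x.and y)))
    (dtrans hx (dax (IntAx.andIntro x y)))) hy

/-- Pairing of theorems. -/
lemma dpair {x y : Fm} (hx : Deriv L Φ x) (hy : Deriv L Φ y) :
    Deriv L Φ (x.and y) :=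
  Deriv.mp (Deriv.mp (dax (IntAx.andIntro x y)) hx) hy

end Helpers

/-- ⊢_{EL3⁻} □φ ↔ (φ ≡ ⊤). -/
theorem stmt_1 (φ : Fm) :
    Thm ModalLogic.EL3m ((φ.box).iff (Fm.ident φ Fm.top)) := by
  set L := ModalLogic.EL3m
  set B := φ.box
  set X := (φ.imp Fm.top).box
  set Y := (Fm.top.imp φ).box
  -- ⊢ □(φ→⊤)
  have tTop : IPC (∅ : Set Fm) Fm.top := IPC.ax (IntAx.exfalso Fm.bot)
  have hX : Deriv L ∅ X :=
    Deriv.an (IsAxiom.int (IPC.mp (IPC.ax (IntAx.k Fm.top φ)) tTop))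
  -- ⊢ □⊤
  have hTopBox : Deriv L ∅ (Fm.top.box) := Deriv.an (IsAxiom.int tTop)
  -- ⊢ □φ → □(⊤→φ)
  have hBY : Deriv L ∅ (B.imp Y) := by
    have h1 : Deriv L ∅ ((φ.imp (Fm.top.imp φ)).box) :=
      Deriv.an (IsAxiom.int (IPC.ax (IntAx.k φ Fm.top)))
    have h3 : Deriv L ∅ ((B.imp Y).box) :=
      Deriv.mp (Deriv.ax (IsAxiom.a3 L φ (Fm.top.imp φ))) h1
    exact Deriv.mp (Deriv.ax (IsAxiom.a2 L (B.imp Y))) h3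
  -- forward: □φ → (X ∧ Y)
  have fwd : Deriv L ∅ (B.imp (X.and Y)) := dpairImp (dconst hX) hBY
  -- backward: (X ∧ Y) → □φ
  have h7 : Deriv L ∅ (Y.imp ((Fm.top.box).imp B)) :=
    dtrans (Deriv.ax (IsAxiom.a3 L Fm.top φ))
      (Deriv.ax (IsAxiom.a2 L ((Fm.top.box).imp B)))
  have h8 : Deriv L ∅ (Y.imp B) := dapp h7 hTopBox
  have bwd : Deriv L ∅ ((X.and Y).imp B) := dtrans (dax (IntAx.andRight X Y)) h8
  exact dpair fwd bwd
end

section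
/- EL3 has classical reflection: for every formula φ ∈ Fm, ⊢_{EL3} Kφ → φ. -/
lemma ipc_id (Φ : Set Fm) (a : Fm) : IPC Φ (a.imp a) :=
  IPC.mp (IPC.mp (IPC.ax (IntAx.s a (a.imp a) a)) (IPC.ax (IntAx.k a (a.imp a))))
    (IPC.ax (IntAx.k a a))

lemma ipc_deduction {Φ : Set Fm} {a b : Fm} (h : IPC (insert a Φ) b) :
    IPC Φ (a.imp b) := by
  induction h with
  | hyp hm =>
    rcases hm with rfl | hm
    · exact ipc_id _ _
    · exact IPC.mp (IPC.ax (IntAx.k _ a)) (IPC.hyp hm)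
  | ax hax => exact IPC.mp (IPC.ax (IntAx.k _ a)) (IPC.ax hax)
  | mp _ _ ih1 ih2 => exact IPC.mp (IPC.mp (IPC.ax (IntAx.s a _ _)) ih1) ih2

lemma ipc_taut (φ : Fm) :
    IPC ∅ (((φ.k).imp φ.neg.neg).imp ((φ.or φ.neg).imp ((φ.k).imp φ))) := by
  apply ipc_deduction; apply ipc_deduction; apply ipc_deduction
  have h1 : IPC (insert (φ.k) (insert (φ.or φ.neg)
      (insert ((φ.k).imp φ.neg.neg) (∅ : Set Fm)))) ((φ.k).imp φ.neg.neg) :=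
    IPC.hyp (by simp)
  have h2 : IPC (insert (φ.k) (insert (φ.or φ.neg)
      (insert ((φ.k).imp φ.neg.neg) (∅ : Set Fm)))) (φ.or φ.neg) :=
    IPC.hyp (by simp)
  have h3 : IPC (insert (φ.k) (insert (φ.or φ.neg)
      (insert ((φ.k).imp φ.neg.neg) (∅ : Set Fm)))) (φ.k) :=
    IPC.hyp (by simp)
  have hnn := IPC.mp h1 h3
  have hnf : IPC (insert (φ.k) (insert (φ.or φ.neg)
      (insert ((φ.k).imp φ.neg.neg) (∅ : Set Fm)))) (φ.neg.imp φ) := by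
    apply ipc_deduction
    have hn : IPC (insert φ.neg (insert (φ.k) (insert (φ.or φ.neg)
        (insert ((φ.k).imp φ.neg.neg) (∅ : Set Fm))))) φ.neg := IPC.hyp (by simp)
    have hnn' := IPC.mp (IPC.hyp (show ((φ.k).imp φ.neg.neg) ∈ _ by simp))
      (IPC.hyp (show (φ.k) ∈ _ by simp) :
        IPC (insert φ.neg (insert (φ.k) (insert (φ.or φ.neg)
          (insert ((φ.k).imp φ.neg.neg) (∅ : Set Fm))))) (φ.k))
    exact IPC.mp (IPC.ax (IntAx.exfalso φ)) (IPC.mp hnn' hn)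
  exact IPC.mp (IPC.mp (IPC.mp (IPC.ax (IntAx.orElim φ φ.neg φ)) (ipc_id _ φ)) hnf) h2

/-- classical reflection, ⊢_{EL3} Kφ → φ. -/
theorem stmt_2 (φ : Fm) : Thm ModalLogic.EL3 ((φ.k).imp φ) := by
  have htaut : Deriv ModalLogic.EL3 ∅
      (((φ.k).imp φ.neg.neg).imp ((φ.or φ.neg).imp ((φ.k).imp φ))) :=
    Deriv.ax (IsAxiom.int (ipc_taut φ))
  have h8 : Deriv ModalLogic.EL3 ∅ ((φ.k).imp φ.neg.neg) :=
    Deriv.ax (IsAxiom.a8 φ (Or.inl rfl))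
  exact Deriv.mp (Deriv.mp htaut h8) (Deriv.tnd φ)
end

section
/- For every formula φ ∈ Fm, ⊢_{EL5} ¬Kφ → K¬□φ. -/
lemma thm_intax {L : ModalLogic} {φ : Fm} (h : IntAx φ) : Thm L φ :=
  Deriv.ax (IsAxiom.int (IPC.ax h))

lemma thm_trans {L : ModalLogic} {a b c : Fm}
    (hab : Thm L (a.imp b)) (hbc : Thm L (b.imp c)) : Thm L (a.imp c) := by
  have h1 : Thm L (a.imp (b.imp c)) :=
    Deriv.mp (thm_intax (IntAx.k (b.imp c) a)) hbc
  exact Deriv.mp (Deriv.mp (thm_intax (IntAx.s a b c)) h1) hab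

lemma thm_mp2 {L : ModalLogic} {x y z : Fm}
    (h : Thm L (x.imp (y.imp z))) (hy : Thm L y) : Thm L (x.imp z) := by
  have hxy : Thm L (x.imp y) := Deriv.mp (thm_intax (IntAx.k y x)) hy
  exact Deriv.mp (Deriv.mp (thm_intax (IntAx.s x y z)) h) hxy

lemma thm_comp {L : ModalLogic} {p q : Fm} (hpq : Thm L (p.imp q)) (r : Fm) :
    Thm L ((q.imp r).imp (p.imp r)) := by
  have hA : Thm L ((q.imp r).imp (p.imp (q.imp r))) := thm_intax (IntAx.k (q.imp r) p)
  have hB : Thm L ((p.imp (q.imp r)).imp ((p.imp q).imp (p.imp r))) :=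
    thm_intax (IntAx.s p q r)
  exact thm_mp2 (thm_trans hA hB) hpq

/-- ⊢_{EL5} ¬Kφ → K¬□φ. -/
theorem stmt_3 (φ : Fm) :
    Thm ModalLogic.EL5 ((φ.k.neg).imp (φ.box.neg.k)) := by
  -- □φ → Kφ
  have h1 : Thm ModalLogic.EL5 ((φ.box).imp φ.k) :=
    thm_trans (Deriv.ax (IsAxiom.a7 φ (by decide)))
      (Deriv.ax (IsAxiom.a2 _ φ.k))
  -- ¬Kφ → ¬□φ
  have h2 : Thm ModalLogic.EL5 ((φ.k.neg).imp (φ.box.neg)) := thm_comp h1 Fm.bot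
  -- ¬□φ → □¬□φ
  have h3 : Thm ModalLogic.EL5 ((φ.box.neg).imp (φ.box.neg.box)) :=
    Deriv.ax (IsAxiom.a5 φ rfl)
  -- □¬□φ → □K¬□φ
  have h4 : Thm ModalLogic.EL5 ((φ.box.neg.box).imp (φ.box.neg.k.box)) :=
    Deriv.ax (IsAxiom.a7 _ (by decide))
  -- □K¬□φ → K¬□φ
  have h5 : Thm ModalLogic.EL5 ((φ.box.neg.k.box).imp (φ.box.neg.k)) :=
    Deriv.ax (IsAxiom.a2 _ _)
  exact thm_trans (thm_trans (thm_trans h2 h3) h4) h5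
end

section
/- For every formula φ ∈ Fm, ⊢_{EL5} ¬□φ → K¬□φ. -/
/-- Syllogism: from a→b and b→c derive a→c. -/
lemma derivSyllogism {L : ModalLogic} {Φ : Set Fm} {a b c : Fm}
    (h1 : Deriv L Φ (a.imp b)) (h2 : Deriv L Φ (b.imp c)) :
    Deriv L Φ (a.imp c) := by
  have hk : Deriv L Φ ((b.imp c).imp (a.imp (b.imp c))) :=
    Deriv.ax (IsAxiom.int (IPC.ax (IntAx.k _ _)))
  have hs : Deriv L Φ ((a.imp (b.imp c)).imp ((a.imp b).imp (a.imp c))) :=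
    Deriv.ax (IsAxiom.int (IPC.ax (IntAx.s _ _ _)))
  exact Deriv.mp (Deriv.mp hs (Deriv.mp hk h2)) h1

/-- ⊢_{EL5} ¬□φ → K¬□φ. -/
theorem stmt_6 (φ : Fm) :
    Thm ModalLogic.EL5 ((φ.box.neg).imp (φ.box.neg.k)) := by
  have h5 : Deriv ModalLogic.EL5 ∅ ((φ.box.neg).imp (φ.box.neg.box)) :=
    Deriv.ax (IsAxiom.a5 φ rfl)
  have h7 : Deriv ModalLogic.EL5 ∅ ((φ.box.neg.box).imp (φ.box.neg.k.box)) :=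
    Deriv.ax (IsAxiom.a7 _ (by decide))
  have h2 : Deriv ModalLogic.EL5 ∅ ((φ.box.neg.k.box).imp (φ.box.neg.k)) :=
    Deriv.ax (IsAxiom.a2 _ _)
  exact derivSyllogism (derivSyllogism h5 h7) h2
end

section
/- For every formula φ ∈ Fm, ⊢_{EL5} K□φ ∨ K¬□φ. -/
/-- ⊢_{EL5} K□φ ∨ K¬□φ. -/
theorem stmt_10 (φ : Fm) :
    Thm ModalLogic.EL5 ((φ.box.k).or (φ.box.neg.k)) := by
  have tr : ∀ a b c : Fm, Deriv ModalLogic.EL5 ∅ (a.imp b) →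
      Deriv ModalLogic.EL5 ∅ (b.imp c) → Deriv ModalLogic.EL5 ∅ (a.imp c) := by
    intro a b c hab hbc
    have hS : Deriv ModalLogic.EL5 ∅
        ((a.imp (b.imp c)).imp ((a.imp b).imp (a.imp c))) :=
      Deriv.ax (IsAxiom.int (IPC.ax (IntAx.s a b c)))
    have hK : Deriv ModalLogic.EL5 ∅ ((b.imp c).imp (a.imp (b.imp c))) :=
      Deriv.ax (IsAxiom.int (IPC.ax (IntAx.k (b.imp c) a)))
    exact Deriv.mp (Deriv.mp hS (Deriv.mp hK hbc)) hab
  -- □φ → K□φ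
  have h1 : Deriv ModalLogic.EL5 ∅ ((φ.box).imp (φ.box.k)) := by
    refine tr _ (φ.box.box) _ (Deriv.ax (IsAxiom.a4 φ (Or.inr rfl))) ?_
    refine tr _ (φ.box.k.box) _ (Deriv.ax (IsAxiom.a7 φ.box (by decide))) ?_
    exact Deriv.ax (IsAxiom.a2 _ (φ.box.k))
  -- ¬□φ → K¬□φ
  have h2 : Deriv ModalLogic.EL5 ∅ ((φ.box.neg).imp (φ.box.neg.k)) := by
    refine tr _ (φ.box.neg.box) _ (Deriv.ax (IsAxiom.a5 φ rfl)) ?_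
    refine tr _ (φ.box.neg.k.box) _ (Deriv.ax (IsAxiom.a7 φ.box.neg (by decide))) ?_
    exact Deriv.ax (IsAxiom.a2 _ (φ.box.neg.k))
  set goal := (φ.box.k).or (φ.box.neg.k) with hg
  have g1 : Deriv ModalLogic.EL5 ∅ ((φ.box).imp goal) :=
    tr _ _ _ h1 (Deriv.ax (IsAxiom.int (IPC.ax (IntAx.orInl (φ.box.k) (φ.box.neg.k)))))
  have g2 : Deriv ModalLogic.EL5 ∅ ((φ.box.neg).imp goal) :=
    tr _ _ _ h2 (Deriv.ax (IsAxiom.int (IPC.ax (IntAx.orInr (φ.box.k) (φ.box.neg.k)))))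
  have hOE : Deriv ModalLogic.EL5 ∅
      (((φ.box).imp goal).imp (((φ.box.neg).imp goal).imp
        (((φ.box).or (φ.box.neg)).imp goal))) :=
    Deriv.ax (IsAxiom.int (IPC.ax (IntAx.orElim (φ.box) (φ.box.neg) goal)))
  exact Deriv.mp (Deriv.mp (Deriv.mp hOE g1) g2) (Deriv.tnd φ.box)
end

section
/- The scheme □Kφ → □φ is not derivable in EL5: there exists a formula φ ∈ Fm (e.g., a propositional variable x) such that ⊬_{EL5} □Kφ → □φ. -/
namespace Countermodel

/-- Heyting implication on the 3-element chain. -/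
def himp (a b : Fin 3) : Fin 3 := if a ≤ b then 2 else b

/-- Valuation in the 3-element Heyting algebra with designated filter {1,2}:
variables get ½, □ collapses to {0,1}, K is double negation. -/
def m : Fm → Fin 3
  | .var _ => 1
  | .bot => 0
  | .and a b => min (m a) (m b)
  | .or a b => max (m a) (m b)
  | .imp a b => himp (m a) (m b)
  | .box a => if m a = 2 then 2 else 0
  | .k a => if m a = 0 then 0 else 2

def bx (a : Fin 3) : Fin 3 := if a = 2 then 2 else 0
def kk (a : Fin 3) : Fin 3 := if a = 0 then 0 else 2

lemma m_box (a : Fm) : m (a.box) = bx (m a) := rfl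
lemma m_k (a : Fm) : m (a.k) = kk (m a) := rfl
lemma m_imp (a b : Fm) : m (a.imp b) = himp (m a) (m b) := rfl
lemma m_and (a b : Fm) : m (a.and b) = min (m a) (m b) := rfl
lemma m_or (a b : Fm) : m (a.or b) = max (m a) (m b) := rfl
lemma m_neg (a : Fm) : m (a.neg) = himp (m a) 0 := rfl

lemma L_k : ∀ a b : Fin 3, himp a (himp b a) = 2 := by decide
lemma L_s : ∀ a b c : Fin 3,
    himp (himp a (himp b c)) (himp (himp a b) (himp a c)) = 2 := by decide
lemma L_andIntro : ∀ a b : Fin 3, himp a (himp b (min a b)) = 2 := by decide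
lemma L_andLeft : ∀ a b : Fin 3, himp (min a b) a = 2 := by decide
lemma L_andRight : ∀ a b : Fin 3, himp (min a b) b = 2 := by decide
lemma L_orInl : ∀ a b : Fin 3, himp a (max a b) = 2 := by decide
lemma L_orInr : ∀ a b : Fin 3, himp b (max a b) = 2 := by decide
lemma L_orElim : ∀ a b c : Fin 3,
    himp (himp a c) (himp (himp b c) (himp (max a b) c)) = 2 := by decide
lemma L_exfalso : ∀ a : Fin 3, himp 0 a = 2 := by decide
lemma L_mp : ∀ a b : Fin 3, himp a b = 2 → a = 2 → b = 2 := by decide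
lemma L_a1 : ∀ a b : Fin 3, himp (bx (max a b)) (max (bx a) (bx b)) = 2 := by decide
lemma L_a2 : ∀ a : Fin 3, himp (bx a) a = 2 := by decide
lemma L_a3 : ∀ a b : Fin 3, himp (bx (himp a b)) (bx (himp (bx a) (bx b))) = 2 := by decide
lemma L_a7 : ∀ a : Fin 3, himp (bx a) (bx (kk a)) = 2 := by decide
lemma L_a8 : ∀ a : Fin 3, himp (kk a) (himp (himp a 0) 0) = 2 := by decide
lemma L_a4 : ∀ a : Fin 3, himp (bx a) (bx (bx a)) = 2 := by decide
lemma L_a5 : ∀ a : Fin 3, himp (himp (bx a) 0) (bx (himp (bx a) 0)) = 2 := by decide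
lemma L_tnd : ∀ a : Fin 3, 1 ≤ max a (himp a 0) := by decide
lemma L_mp1 : ∀ a b : Fin 3, 1 ≤ himp a b → 1 ≤ a → 1 ≤ b := by decide
lemma L_bx2 : ∀ a : Fin 3, a = 2 → 1 ≤ bx a := by decide

lemma ipc_val {φ : Fm} (h : IPC ∅ φ) : m φ = 2 := by
  induction h with
  | hyp h => exact absurd h (Set.notMem_empty _)
  | ax h =>
    cases h with
    | k φ ψ => exact L_k (m φ) (m ψ)
    | s φ ψ χ => exact L_s (m φ) (m ψ) (m χ)
    | andIntro φ ψ => exact L_andIntro (m φ) (m ψ)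
    | andLeft φ ψ => exact L_andLeft (m φ) (m ψ)
    | andRight φ ψ => exact L_andRight (m φ) (m ψ)
    | orInl φ ψ => exact L_orInl (m φ) (m ψ)
    | orInr φ ψ => exact L_orInr (m φ) (m ψ)
    | orElim φ ψ χ => exact L_orElim (m φ) (m ψ) (m χ)
    | exfalso φ => exact L_exfalso (m φ)
  | mp _ _ ih1 ih2 => exact L_mp _ _ ih1 ih2

lemma ax_val {φ : Fm} (h : IsAxiom .EL5 φ) : m φ = 2 := by
  cases h with
  | int h => exact ipc_val h
  | a1 φ ψ => exact L_a1 (m φ) (m ψ)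
  | a2 φ => exact L_a2 (m φ)
  | a3 φ ψ => exact L_a3 (m φ) (m ψ)
  | a7 φ _ => exact L_a7 (m φ)
  | a8 φ _ => exact L_a8 (m φ)
  | a4 φ _ => exact L_a4 (m φ)
  | a5 φ _ => exact L_a5 (m φ)

lemma sound {φ : Fm} (h : Deriv .EL5 ∅ φ) : 1 ≤ m φ := by
  induction h with
  | hyp h => exact absurd h (Set.notMem_empty _)
  | ax h => rw [ax_val h]; decide
  | tnd φ => exact L_tnd (m φ)
  | mp _ _ ih1 ih2 => exact L_mp1 _ _ ih1 ih2
  | an h => exact L_bx2 _ (ax_val h)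

end Countermodel

/-- the scheme □Kφ → □φ is not derivable in EL5. -/
theorem stmt_14 : ∃ φ : Fm, ¬ Thm ModalLogic.EL5 ((φ.k.box).imp (φ.box)) := by
  refine ⟨.var 0, fun h => ?_⟩
  have := Countermodel.sound h
  simp [Countermodel.m, Countermodel.himp] at this
end

section
/- The scheme Kφ ∨ K¬φ is not derivable in EL5: there exists a formula φ ∈ Fm (e.g., a propositional variable x) such that ⊬_{EL5} Kφ ∨ K¬φ. -/
/-- Two-node intuitionistic Kripke forcing; □ and K both mean "forced at the
root node `false`". Variables are forced exactly at the top node `true`. -/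
def force : Bool → Fm → Prop
  | w, .var _ => w = true
  | _, .bot => False
  | w, .and a b => force w a ∧ force w b
  | w, .or a b => force w a ∨ force w b
  | w, .imp a b => ∀ v, w ≤ v → force v a → force v b
  | _, .box a => force false a
  | _, .k a => force false a

theorem force_mono : ∀ (a : Fm) {w v : Bool}, w ≤ v → force w a → force v a := by
  intro a
  induction a with
  | var n =>
      intro w v h hw
      cases v
      · exact absurd (hw ▸ h : true ≤ false) (by decide)
      · rfl
  | bot => intro w v _ h; exact h.elim
  | and a b iha ihb => intro w v h hw; exact ⟨iha h hw.1, ihb h hw.2⟩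
  | or a b iha ihb =>
      intro w v h hw
      cases hw with
      | inl ha => exact Or.inl (iha h ha)
      | inr hb => exact Or.inr (ihb h hb)
  | imp a b iha ihb =>
      intro w v h hw u hu ha
      exact hw u (le_trans h hu) ha
  | box a ih => intro w v _ hw; exact hw
  | k a ih => intro w v _ hw; exact hw

theorem intAx_force {φ : Fm} (h : IntAx φ) : ∀ w, force w φ := by
  cases h with
  | k φ ψ =>
      intro w v _ ha u hu _
      exact force_mono φ hu ha
  | s φ ψ χ =>
      intro w v _ h1 u hu h2 t ht hφ
      exact h1 t (le_trans hu ht) hφ t le_rfl (h2 t ht hφ)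
  | andIntro φ ψ =>
      intro w v _ ha u hu hb
      exact ⟨force_mono φ hu ha, hb⟩
  | andLeft φ ψ => intro w v _ h; exact h.1
  | andRight φ ψ => intro w v _ h; exact h.2
  | orInl φ ψ => intro w v _ h; exact Or.inl h
  | orInr φ ψ => intro w v _ h; exact Or.inr h
  | orElim φ ψ χ =>
      intro w v _ h1 u hu h2 t ht hor
      cases hor with
      | inl ha => exact h1 t (le_trans hu ht) ha
      | inr hb => exact h2 t ht hb
  | exfalso φ => intro w v _ h; exact h.elim

theorem ipc_force {φ : Fm} (h : IPC ∅ φ) : ∀ w, force w φ := by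
  induction h with
  | hyp h => exact absurd h (Set.notMem_empty _)
  | ax h => exact intAx_force h
  | mp h1 h2 ih1 ih2 => intro w; exact ih1 w w le_rfl (ih2 w)

theorem axiom_force {φ : Fm} (h : IsAxiom ModalLogic.EL5 φ) : ∀ w, force w φ := by
  cases h with
  | int h => exact ipc_force h
  | a1 φ ψ => intro w v _ h; exact h
  | a2 φ =>
      intro w v _ h
      exact force_mono φ (Bool.false_le v) h
  | a3 φ ψ =>
      intro w v _ h u hu hb
      exact h false (Bool.false_le false) hb
  | a7 φ _ => intro w v _ h; exact h
  | a8 φ _ =>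
      intro w v _ h u hu hn
      exact hn true (Bool.le_true u) (force_mono φ (Bool.false_le true) h)
  | a4 φ _ => intro w v _ h; exact h
  | a5 φ _ =>
      intro w v _ h u hu hb
      exact h v le_rfl hb

theorem deriv_force {φ : Fm} (h : Deriv ModalLogic.EL5 ∅ φ) : force true φ := by
  induction h with
  | hyp h => exact absurd h (Set.notMem_empty _)
  | ax h => exact axiom_force h true
  | tnd φ =>
      by_cases hφ : force true φ
      · exact Or.inl hφ
      · refine Or.inr ?_
        intro v hv ha
        have hv' : v = true := by
          cases v
          · exact absurd hv (by decide)
          · rfl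
        exact hφ (hv' ▸ ha)
  | mp h1 h2 ih1 ih2 => exact ih1 true le_rfl ih2
  | an h => exact axiom_force h false

/-- the scheme Kφ ∨ K¬φ is not derivable in EL5. -/
theorem stmt_15 : ∃ φ : Fm, ¬ Thm ModalLogic.EL5 ((φ.k).or (φ.neg.k)) := by
  refine ⟨Fm.var 0, fun h => ?_⟩
  have := deriv_force h
  cases this with
  | inl h1 => exact Bool.false_ne_true h1
  | inr h2 =>
      exact h2 true (Bool.le_true false) rfl
end

section
/- Let 𝓛 ∈ {EL3⁻, EL3, EL4, EL5} and let Φ ∪ {χ} ⊆ Fm₀ be a set of propositional formulas (formulas containing neither □ nor K). Then □Φ ⊢_𝓛 □χ if and only if Φ ⊢_{IPC} χ, where □Φ := {□ψ : ψ ∈ Φ} and ⊢_{IPC} denotes derivability in intuitionistic propositional calculus. -/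
namespace Stmt17

/-! ### Basic IPC facts -/

theorem ipc_weaken {Φ Ψ : Set Fm} {φ : Fm} (h : IPC Φ φ) (hs : Φ ⊆ Ψ) : IPC Ψ φ := by
  induction h with
  | hyp h => exact IPC.hyp (hs h)
  | ax h => exact IPC.ax h
  | mp _ _ ih1 ih2 => exact IPC.mp ih1 ih2

theorem ipc_id (Φ : Set Fm) (φ : Fm) : IPC Φ (φ.imp φ) :=
  IPC.mp (IPC.mp (IPC.ax (IntAx.s φ (φ.imp φ) φ)) (IPC.ax (IntAx.k φ (φ.imp φ))))
    (IPC.ax (IntAx.k φ φ))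

theorem deduction {Φ : Set Fm} {a b : Fm} (h : IPC (insert a Φ) b) : IPC Φ (a.imp b) := by
  induction h with
  | hyp h =>
    rcases Set.mem_insert_iff.mp h with h | h
    · subst h; exact ipc_id Φ _
    · exact IPC.mp (IPC.ax (IntAx.k _ _)) (IPC.hyp h)
  | ax h => exact IPC.mp (IPC.ax (IntAx.k _ _)) (IPC.ax h)
  | mp _ _ ih1 ih2 => exact IPC.mp (IPC.mp (IPC.ax (IntAx.s _ _ _)) ih1) ih2

theorem ipc_cut {Φ : Set Fm} {a b : Fm} (ha : IPC Φ a) (h : IPC (insert a Φ) b) : IPC Φ b :=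
  IPC.mp (deduction h) ha

theorem ipc_negImp (Φ : Set Fm) (a b : Fm) : IPC Φ (a.neg.imp (a.imp b)) := by
  apply deduction; apply deduction
  exact IPC.mp (IPC.ax (IntAx.exfalso b))
    (IPC.mp (IPC.hyp (Set.mem_insert_of_mem _ (Set.mem_insert _ _)))
      (IPC.hyp (Set.mem_insert _ _)))

theorem ipc_dni (Φ : Set Fm) (φ : Fm) : IPC Φ (φ.imp φ.neg.neg) := by
  apply deduction; apply deduction
  exact IPC.mp (IPC.hyp (Set.mem_insert _ _))
    (IPC.hyp (Set.mem_insert_of_mem _ (Set.mem_insert _ _)))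

theorem ipc_em_dn (Φ : Set Fm) (φ : Fm) : IPC Φ ((φ.or φ.neg).neg.neg) := by
  apply deduction
  have hn : IPC (insert (φ.or φ.neg).neg Φ) ((φ.or φ.neg).neg) := IPC.hyp (Set.mem_insert _ _)
  have hnphi : IPC (insert (φ.or φ.neg).neg Φ) φ.neg := by
    apply deduction
    exact IPC.mp (IPC.hyp (Set.mem_insert_of_mem _ (Set.mem_insert _ _)))
      (IPC.mp (IPC.ax (IntAx.orInl φ φ.neg)) (IPC.hyp (Set.mem_insert _ _)))
  exact IPC.mp hn (IPC.mp (IPC.ax (IntAx.orInr φ φ.neg)) hnphi)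

theorem ipc_dn_mp {Φ : Set Fm} {a b : Fm} (hab : IPC Φ ((a.imp b).neg.neg))
    (ha : IPC Φ (a.neg.neg)) : IPC Φ (b.neg.neg) := by
  apply deduction
  set Γ := insert b.neg Φ with hΓ
  have h1 : IPC Γ ((a.imp b).neg.neg) := ipc_weaken hab (Set.subset_insert _ _)
  have h2 : IPC Γ (a.neg.neg) := ipc_weaken ha (Set.subset_insert _ _)
  have h3 : IPC Γ ((a.imp b).neg) := by
    apply deduction
    have h4 : IPC (insert (a.imp b) Γ) a.neg := by
      apply deduction
      have hyb : IPC (insert a (insert (a.imp b) Γ)) b.neg :=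
        IPC.hyp (Set.mem_insert_of_mem _ (Set.mem_insert_of_mem _ (Set.mem_insert _ _)))
      have hyab : IPC (insert a (insert (a.imp b) Γ)) (a.imp b) :=
        IPC.hyp (Set.mem_insert_of_mem _ (Set.mem_insert _ _))
      have hya : IPC (insert a (insert (a.imp b) Γ)) a := IPC.hyp (Set.mem_insert _ _)
      exact IPC.mp hyb (IPC.mp hyab hya)
    exact IPC.mp (ipc_weaken h2 (Set.subset_insert _ _)) h4
  exact IPC.mp h1 h3

/-! ### Classical propositional calculus and Glivenko's theorem -/

inductive CPC (Φ : Set Fm) : Fm → Prop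
  | hyp {φ} : φ ∈ Φ → CPC Φ φ
  | ax {φ} : IntAx φ → CPC Φ φ
  | em (φ : Fm) : CPC Φ (φ.or φ.neg)
  | mp {φ ψ} : CPC Φ (φ.imp ψ) → CPC Φ φ → CPC Φ ψ

theorem glivenko {Φ : Set Fm} {φ : Fm} (h : CPC Φ φ) : IPC Φ (φ.neg.neg) := by
  induction h with
  | hyp h => exact IPC.mp (ipc_dni _ _) (IPC.hyp h)
  | ax h => exact IPC.mp (ipc_dni _ _) (IPC.ax h)
  | em φ => exact ipc_em_dn _ _
  | mp _ _ ih1 ih2 => exact ipc_dn_mp ih1 ih2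

/-- The set of all excluded-middle instances. -/
def EMs : Set Fm := {ψ | ∃ φ : Fm, ψ = φ.or φ.neg}

theorem cpc_of_ipc_em {T : Set Fm} {φ : Fm} (h : IPC (T ∪ EMs) φ) : CPC T φ := by
  induction h with
  | hyp h =>
    rcases h with h | h
    · exact CPC.hyp h
    · obtain ⟨ψ, rfl⟩ := h; exact CPC.em ψ
  | ax h => exact CPC.ax h
  | mp _ _ ih1 ih2 => exact CPC.mp ih1 ih2

/-! ### Prime theories and the Lindenbaum lemma -/

structure PrimeTh (S : Set Fm) : Prop where
  closed : ∀ {φ}, IPC S φ → φ ∈ S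
  nbot : Fm.bot ∉ S
  prime : ∀ {a b}, (a.or b) ∈ S → a ∈ S ∨ b ∈ S

theorem ipc_chain {c : Set (Set Fm)} (hc : IsChain (· ⊆ ·) c) (hne : c.Nonempty) {φ : Fm}
    (h : IPC (⋃₀ c) φ) : ∃ S ∈ c, IPC S φ := by
  induction h with
  | hyp h => obtain ⟨S, hS, hm⟩ := h; exact ⟨S, hS, IPC.hyp hm⟩
  | ax h => obtain ⟨S, hS⟩ := hne; exact ⟨S, hS, IPC.ax h⟩
  | mp _ _ ih1 ih2 =>
    obtain ⟨S1, hS1, h1⟩ := ih1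
    obtain ⟨S2, hS2, h2⟩ := ih2
    rcases eq_or_ne S1 S2 with rfl | hne'
    · exact ⟨S1, hS1, IPC.mp h1 h2⟩
    · rcases hc hS1 hS2 hne' with h | h
      · exact ⟨S2, hS2, IPC.mp (ipc_weaken h1 h) h2⟩
      · exact ⟨S1, hS1, IPC.mp h1 (ipc_weaken h2 h)⟩

theorem lindenbaum {Φ : Set Fm} {χ : Fm} (h : ¬ IPC Φ χ) :
    ∃ S : Set Fm, PrimeTh S ∧ Φ ⊆ S ∧ χ ∉ S := by
  obtain ⟨M, hΦM, hM, hmax⟩ := zorn_subset_nonempty {S : Set Fm | ¬ IPC S χ}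
    (fun c hcS hc hne => ⟨⋃₀ c, fun hd => by
        obtain ⟨S, hS, hd'⟩ := ipc_chain hc hne hd
        exact hcS hS hd',
      fun s hs => Set.subset_sUnion_of_mem hs⟩) Φ h
  have hclosed : ∀ {φ : Fm}, IPC M φ → φ ∈ M := by
    intro φ hφ
    by_contra hnm
    have hin : ¬ IPC (insert φ M) χ := fun hd => hM (ipc_cut hφ hd)
    have := hmax hin (Set.subset_insert φ M)
    exact hnm (this (Set.mem_insert _ _))
  have hforce : ∀ {a : Fm}, a ∉ M → IPC (insert a M) χ := by
    intro a ha
    by_contra hd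
    exact ha ((hmax hd (Set.subset_insert a M)) (Set.mem_insert _ _))
  refine ⟨M, ⟨hclosed, ?_, ?_⟩, hΦM, fun hχ => hM (IPC.hyp hχ)⟩
  · intro hb
    exact hM (IPC.mp (IPC.ax (IntAx.exfalso χ)) (IPC.hyp hb))
  · intro a b hab
    by_contra hor
    push_neg at hor
    have h1 : IPC M (a.imp χ) := deduction (hforce hor.1)
    have h2 : IPC M (b.imp χ) := deduction (hforce hor.2)
    exact hM (IPC.mp (IPC.mp (IPC.mp (IPC.ax (IntAx.orElim a b χ)) h1) h2) (IPC.hyp hab))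

theorem PrimeTh.mp_mem {S : Set Fm} (hS : PrimeTh S) {a b : Fm}
    (h : (a.imp b) ∈ S) (ha : a ∈ S) : b ∈ S :=
  hS.closed (IPC.mp (IPC.hyp h) (IPC.hyp ha))

/-! ### Kripke-style semantics -/

/-- A world of the canonical model over root theory `T`. -/
def Good (T S : Set Fm) : Prop := PrimeTh S ∧ T ⊆ S

/-- The accessibility (order) on worlds: `some S` are prime theories over `T`,
`none` is a classical world sitting directly above the root `some T`. -/
def wle (T : Set Fm) : Option (Set Fm) → Option (Set Fm) → Prop
  | some S, some S' => Good T S ∧ Good T S' ∧ S ⊆ S'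
  | some S, none => PrimeTh T ∧ S = T
  | none, some _ => False
  | none, none => True

theorem wle_trans {T : Set Fm} : ∀ {w1 w2 w3 : Option (Set Fm)},
    wle T w1 w2 → wle T w2 w3 → wle T w1 w3
  | some S1, some S2, some S3, ⟨G1, _, h12⟩, ⟨_, G3, h23⟩ => ⟨G1, G3, h12.trans h23⟩
  | some S1, some S2, none, ⟨G1, G2, h12⟩, ⟨hT, hS2⟩ =>
      ⟨hT, Set.Subset.antisymm (hS2 ▸ h12) G1.2⟩
  | some S1, none, none, h, _ => h
  | none, none, none, _, _ => trivial
  | none, none, some _, _, h => h.elim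

theorem wle_right {T : Set Fm} : ∀ {w w' : Option (Set Fm)}, wle T w w' → wle T w' w'
  | some _, some S', ⟨_, G', _⟩ => ⟨G', G', subset_rfl⟩
  | some _, none, _ => trivial
  | none, none, _ => trivial

theorem wle_root {T : Set Fm} (hT : PrimeTh T) : ∀ {w w' : Option (Set Fm)},
    wle T w w' → wle T (some T) w'
  | some _, some S', ⟨_, G', _⟩ => ⟨⟨hT, subset_rfl⟩, G', G'.2⟩
  | some _, none, _ => ⟨hT, rfl⟩
  | none, none, _ => ⟨hT, rfl⟩

theorem wle_none {T : Set Fm} : ∀ {w : Option (Set Fm)}, wle T none w → w = none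
  | none, _ => rfl

/-- Forcing.  At prime-theory worlds this is intuitionistic Kripke forcing;
at the classical world `none` atoms are read in `Tinf`; `□φ` is forced iff `φ`
is forced at the root `some T`; `Kφ` is forced iff `φ` is. -/
def force (T Tinf : Set Fm) : Option (Set Fm) → Fm → Prop
  | w, .var n =>
      match w with
      | some S => Fm.var n ∈ S
      | none => Fm.var n ∈ Tinf
  | _, .bot => False
  | w, .and a b => force T Tinf w a ∧ force T Tinf w b
  | w, .or a b => force T Tinf w a ∨ force T Tinf w b
  | w, .imp a b => ∀ w', wle T w w' → force T Tinf w' a → force T Tinf w' b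
  | _, .box a => force T Tinf (some T) a
  | w, .k a => force T Tinf w a

section Semantics

variable {T Tinf : Set Fm}

theorem persist (hsub : T ⊆ Tinf) (φ : Fm) : ∀ {w w' : Option (Set Fm)},
    wle T w w' → force T Tinf w φ → force T Tinf w' φ := by
  induction φ with
  | var n =>
    intro w w' hle h
    match w, w', hle with
    | some S, some S', ⟨_, _, hss⟩ => exact hss h
    | some S, none, ⟨_, hST⟩ => exact hsub (hST ▸ h)
    | none, none, _ => exact h
  | bot => intro w w' _ h; exact h.elim
  | and a b iha ihb => intro w w' hle h; exact ⟨iha hle h.1, ihb hle h.2⟩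
  | or a b iha ihb =>
    intro w w' hle h
    rcases h with h | h
    · exact Or.inl (iha hle h)
    · exact Or.inr (ihb hle h)
  | imp a b _ _ =>
    intro w w' hle h w'' hle' ha
    exact h w'' (wle_trans hle hle') ha
  | box a _ => intro w w' _ h; exact h
  | k a ih => intro w w' hle h; exact ih hle h

theorem intax_forced (hsub : T ⊆ Tinf) {φ : Fm} (h : IntAx φ) (w : Option (Set Fm)) :
    force T Tinf w φ := by
  cases h with
  | k φ ψ =>
    intro w1 _ ha w2 h2 _
    exact persist hsub φ h2 ha
  | s φ ψ χ =>
    intro w1 _ h1 w2 h2 h2' w3 h3 ha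
    exact h1 w3 (wle_trans h2 h3) ha w3 (wle_right h3) (h2' w3 h3 ha)
  | andIntro φ ψ =>
    intro w1 _ ha w2 h2 hb
    exact ⟨persist hsub φ h2 ha, hb⟩
  | andLeft φ ψ => intro w1 _ h; exact h.1
  | andRight φ ψ => intro w1 _ h; exact h.2
  | orInl φ ψ => intro w1 _ h; exact Or.inl h
  | orInr φ ψ => intro w1 _ h; exact Or.inr h
  | orElim φ ψ χ =>
    intro w1 _ hf w2 h2 hg w3 h3 hd
    rcases hd with hd | hd
    · exact hf w3 (wle_trans h2 h3) hd
    · exact hg w3 h3 hd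
  | exfalso φ => intro w1 _ h; exact h.elim

theorem ipc_forced (hsub : T ⊆ Tinf) {φ : Fm} (h : IPC ∅ φ) {w : Option (Set Fm)}
    (hw : wle T w w) : force T Tinf w φ := by
  induction h with
  | hyp h => exact absurd h (Set.notMem_empty _)
  | ax h => exact intax_forced hsub h w
  | mp _ _ ih1 ih2 => exact ih1 w hw ih2

theorem root_refl (hT : PrimeTh T) : wle T (some T) (some T) :=
  ⟨⟨hT, subset_rfl⟩, ⟨hT, subset_rfl⟩, subset_rfl⟩

theorem axiom_forced (hT : PrimeTh T) (hsub : T ⊆ Tinf) {L : ModalLogic} {φ : Fm}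
    (h : IsAxiom L φ) {w : Option (Set Fm)} (hw : wle T w w) : force T Tinf w φ := by
  cases h with
  | int h => exact ipc_forced hsub h hw
  | a1 a b => intro w1 _ hb; exact hb
  | a2 a => intro w1 h1 hb; exact persist hsub a (wle_root hT h1) hb
  | a3 a b =>
    intro w1 _ h w2 h2 hba
    exact h (some T) (root_refl hT) hba
  | a7 a _ => intro w1 _ h; exact h
  | a8 a _ =>
    intro w1 h1 hk w2 h2 hn
    exact hn w2 (wle_right h2) (persist hsub a h2 hk)
  | a4 a _ => intro w1 _ h; exact h
  | a5 a _ =>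
    intro w1 h1 h w2 h2 hb
    exact h w1 (wle_right h1) hb

theorem none_force (hTinf : PrimeTh Tinf)
    (hcomp : ∀ a : Fm, a ∈ Tinf ∨ a.neg ∈ Tinf) :
    ∀ {φ : Fm}, φ.IsProp → (force T Tinf none φ ↔ φ ∈ Tinf) := by
  intro φ
  induction φ with
  | var n => intro _; exact Iff.rfl
  | bot => intro _; exact ⟨fun h => h.elim, fun h => (hTinf.nbot h).elim⟩
  | and a b iha ihb =>
    intro hp
    constructor
    · rintro ⟨ha, hb⟩
      exact hTinf.closed (IPC.mp (IPC.mp (IPC.ax (IntAx.andIntro a b))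
        (IPC.hyp ((iha hp.1).mp ha))) (IPC.hyp ((ihb hp.2).mp hb)))
    · intro h
      exact ⟨(iha hp.1).mpr (hTinf.closed (IPC.mp (IPC.ax (IntAx.andLeft a b)) (IPC.hyp h))),
             (ihb hp.2).mpr (hTinf.closed (IPC.mp (IPC.ax (IntAx.andRight a b)) (IPC.hyp h)))⟩
  | or a b iha ihb =>
    intro hp
    constructor
    · rintro (ha | hb)
      · exact hTinf.closed (IPC.mp (IPC.ax (IntAx.orInl a b)) (IPC.hyp ((iha hp.1).mp ha)))
      · exact hTinf.closed (IPC.mp (IPC.ax (IntAx.orInr a b)) (IPC.hyp ((ihb hp.2).mp hb)))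
    · intro h
      rcases hTinf.prime h with h | h
      · exact Or.inl ((iha hp.1).mpr h)
      · exact Or.inr ((ihb hp.2).mpr h)
  | imp a b iha ihb =>
    intro hp
    constructor
    · intro h
      have h' : force T Tinf none a → force T Tinf none b := fun ha => h none trivial ha
      rcases hcomp a with hA | hA
      · have hb : b ∈ Tinf := (ihb hp.2).mp (h' ((iha hp.1).mpr hA))
        exact hTinf.closed (IPC.mp (IPC.ax (IntAx.k b a)) (IPC.hyp hb))
      · exact hTinf.closed (IPC.mp (ipc_negImp _ a b) (IPC.hyp hA))
    · intro h w' hw' ha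
      obtain rfl := wle_none hw'
      exact (ihb hp.2).mpr (hTinf.mp_mem h ((iha hp.1).mp ha))
  | box a _ => intro hp; exact hp.elim
  | k a _ => intro hp; exact hp.elim

theorem truth (hT : PrimeTh T) (hsub : T ⊆ Tinf) (hTinf : PrimeTh Tinf)
    (hcomp : ∀ a : Fm, a ∈ Tinf ∨ a.neg ∈ Tinf) :
    ∀ {φ : Fm}, φ.IsProp → ∀ {S : Set Fm}, Good T S →
      (force T Tinf (some S) φ ↔ φ ∈ S) := by
  intro φ
  induction φ with
  | var n => intro _ S _; exact Iff.rfl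
  | bot => intro _ S hS; exact ⟨fun h => h.elim, fun h => (hS.1.nbot h).elim⟩
  | and a b iha ihb =>
    intro hp S hS
    constructor
    · rintro ⟨ha, hb⟩
      exact hS.1.closed (IPC.mp (IPC.mp (IPC.ax (IntAx.andIntro a b))
        (IPC.hyp ((iha hp.1 hS).mp ha))) (IPC.hyp ((ihb hp.2 hS).mp hb)))
    · intro h
      exact ⟨(iha hp.1 hS).mpr (hS.1.closed (IPC.mp (IPC.ax (IntAx.andLeft a b)) (IPC.hyp h))),
             (ihb hp.2 hS).mpr (hS.1.closed (IPC.mp (IPC.ax (IntAx.andRight a b)) (IPC.hyp h)))⟩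
  | or a b iha ihb =>
    intro hp S hS
    constructor
    · rintro (ha | hb)
      · exact hS.1.closed (IPC.mp (IPC.ax (IntAx.orInl a b)) (IPC.hyp ((iha hp.1 hS).mp ha)))
      · exact hS.1.closed (IPC.mp (IPC.ax (IntAx.orInr a b)) (IPC.hyp ((ihb hp.2 hS).mp hb)))
    · intro h
      rcases hS.1.prime h with h | h
      · exact Or.inl ((iha hp.1 hS).mpr h)
      · exact Or.inr ((ihb hp.2 hS).mpr h)
  | imp a b iha ihb =>
    intro hp S hS
    constructor
    · intro h
      by_contra hni
      have hnd : ¬ IPC (insert a S) b := fun hd => hni (hS.1.closed (deduction hd))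
      obtain ⟨S', hS', hsub', hb⟩ := lindenbaum hnd
      have hGood : Good T S' := ⟨hS', hS.2.trans ((Set.subset_insert a S).trans hsub')⟩
      have hle : wle T (some S) (some S') := ⟨hS, hGood, (Set.subset_insert a S).trans hsub'⟩
      have ha : force T Tinf (some S') a := (iha hp.1 hGood).mpr (hsub' (Set.mem_insert _ _))
      exact hb ((ihb hp.2 hGood).mp (h (some S') hle ha))
    · intro h w' hw' ha
      match w', hw' with
      | some S', ⟨_, hG', hss⟩ =>
        exact (ihb hp.2 hG').mpr (hG'.1.mp_mem (hss h) ((iha hp.1 hG').mp ha))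
      | none, ⟨_, hST⟩ =>
        have hmem : (a.imp b) ∈ Tinf := hsub (hST ▸ h)
        exact (none_force hTinf hcomp hp.2).mpr
          (hTinf.mp_mem hmem ((none_force hTinf hcomp hp.1).mp ha))
  | box a _ => intro hp; exact hp.elim
  | k a _ => intro hp; exact hp.elim

theorem sound (hT : PrimeTh T) (hsub : T ⊆ Tinf) (hTinf : PrimeTh Tinf)
    (hcomp : ∀ a : Fm, a ∈ Tinf ∨ a.neg ∈ Tinf) {L : ModalLogic} {Φ : Set Fm}
    (hΦp : ∀ ψ ∈ Φ, ψ.IsProp) (hΦT : Φ ⊆ T) {φ : Fm}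
    (h : Deriv L (Fm.box '' Φ) φ) : force T Tinf none φ := by
  induction h with
  | hyp h =>
    obtain ⟨ψ, hψ, rfl⟩ := h
    exact (truth hT hsub hTinf hcomp (hΦp ψ hψ) ⟨hT, subset_rfl⟩).mpr (hΦT hψ)
  | ax h => exact axiom_forced hT hsub h trivial
  | tnd φ =>
    by_cases hf : force T Tinf none φ
    · exact Or.inl hf
    · refine Or.inr ?_
      intro w' hw' hφ
      obtain rfl := wle_none hw'
      exact hf hφ
  | mp _ _ ih1 ih2 => exact ih1 none trivial ih2
  | an h => exact axiom_forced hT hsub h (root_refl hT)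

end Semantics

end Stmt17


/-- for propositional Φ ∪ {χ} ⊆ Fm₀ and
𝓛 ∈ {EL3⁻, EL3, EL4, EL5}: □Φ ⊢_𝓛 □χ iff Φ ⊢_{IPC} χ. -/
theorem stmt_17 (L : ModalLogic)
    (hL : L = ModalLogic.EL3m ∨ L = ModalLogic.EL3 ∨ L = ModalLogic.EL4 ∨
      L = ModalLogic.EL5)
    (Φ : Set Fm) (χ : Fm) (hΦ : ∀ ψ ∈ Φ, ψ.IsProp) (hχ : χ.IsProp) :
    Deriv L (Fm.box '' Φ) (χ.box) ↔ IPC Φ χ := by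
  constructor
  · intro hD
    by_contra hnip
    obtain ⟨T, hT, hΦT, hχT⟩ := Stmt17.lindenbaum hnip
    have hcons : ¬ IPC (T ∪ Stmt17.EMs) Fm.bot := by
      intro hd
      have h1 : IPC T (Fm.bot.neg.neg) := Stmt17.glivenko (Stmt17.cpc_of_ipc_em hd)
      have h2 : IPC T Fm.bot := IPC.mp h1 (Stmt17.ipc_id T Fm.bot)
      exact hT.nbot (hT.closed h2)
    obtain ⟨Tinf, hTinf, hsubU, _⟩ := Stmt17.lindenbaum hcons
    have hsub : T ⊆ Tinf := Set.subset_union_left.trans hsubU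
    have hcomp : ∀ a : Fm, a ∈ Tinf ∨ a.neg ∈ Tinf := fun a =>
      hTinf.prime (hsubU (Set.mem_union_right _ ⟨a, rfl⟩))
    have hroot : Stmt17.force T Tinf (some T) χ :=
      Stmt17.sound hT hsub hTinf hcomp hΦ hΦT hD
    exact hχT ((Stmt17.truth hT hsub hTinf hcomp hχ ⟨hT, subset_rfl⟩).mp hroot)
  · intro hp
    clear hχ
    induction hp with
    | hyp h => exact Deriv.hyp ⟨_, h, rfl⟩
    | ax h => exact Deriv.an (IsAxiom.int (IPC.ax h))
    | mp _ _ ih1 ih2 =>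
      exact Deriv.mp (Deriv.mp (Deriv.ax (IsAxiom.a2 L _))
        (Deriv.mp (Deriv.ax (IsAxiom.a3 L _ _)) ih1)) ih2
end

section
/- Algebraic soundness and completeness of Intuitionistic Epistemic Logic: for every formula φ ∈ Fm_e, φ is a theorem of IEL⁻ if and only if φ is valid in all IEL⁻-models, and φ is a theorem of IEL if and only if φ is valid in all IEL-models. -/
/-- Formulas of the epistemic language Fm_e: variables, ⊥, ∧, ∨, →, K (no □). -/
inductive FmE : Type
  | var : ℕ → FmE
  | bot : FmE
  | and : FmE → FmE → FmE
  | or : FmE → FmE → FmE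
  | imp : FmE → FmE → FmE
  | k : FmE → FmE
  deriving DecidableEq

namespace FmE

/-- ¬φ := φ → ⊥ -/
def neg (φ : FmE) : FmE := φ.imp .bot

end FmE

/-- Hilbert-style axiom schemes of intuitionistic propositional logic, with
schematic letters ranging over all formulas of `FmE` (so all substitution
instances of IPC theorems are obtained by Modus Ponens). -/
inductive IntAxE : FmE → Prop
  | k (φ ψ : FmE) : IntAxE (φ.imp (ψ.imp φ))
  | s (φ ψ χ : FmE) : IntAxE ((φ.imp (ψ.imp χ)).imp ((φ.imp ψ).imp (φ.imp χ)))
  | andIntro (φ ψ : FmE) : IntAxE (φ.imp (ψ.imp (φ.and ψ)))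
  | andLeft (φ ψ : FmE) : IntAxE ((φ.and ψ).imp φ)
  | andRight (φ ψ : FmE) : IntAxE ((φ.and ψ).imp ψ)
  | orInl (φ ψ : FmE) : IntAxE (φ.imp (φ.or ψ))
  | orInr (φ ψ : FmE) : IntAxE (ψ.imp (φ.or ψ))
  | orElim (φ ψ χ : FmE) : IntAxE ((φ.imp χ).imp ((ψ.imp χ).imp ((φ.or ψ).imp χ)))
  | exfalso (φ : FmE) : IntAxE (FmE.bot.imp φ)

/-- Theorems of IEL⁻ (`full = false`) and of IEL (`full = true`):
substitution instances of IPC theorems, K-distribution, intuitionistic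
co-reflection φ→Kφ, for IEL additionally intuitionistic reflection Kφ→¬¬φ;
the only inference rule is Modus Ponens. -/
inductive IELThm : Bool → FmE → Prop
  | int {full : Bool} {φ : FmE} : IntAxE φ → IELThm full φ
  | dist (full : Bool) (φ ψ : FmE) :
      IELThm full (((φ.imp ψ).k).imp ((φ.k).imp (ψ.k)))
  | coref (full : Bool) (φ : FmE) : IELThm full (φ.imp (φ.k))
  | intref (φ : FmE) : IELThm true ((φ.k).imp (φ.neg.neg))
  | mp {full : Bool} {φ ψ : FmE} :
      IELThm full (φ.imp ψ) → IELThm full φ → IELThm full ψ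

/-- An IEL⁻-model: a Heyting algebra with a set `BEL` and an operation `fK`
satisfying truth conditions (i)-(v). -/
structure IELModel (M : Type) [HeytingAlgebra M] where
  BEL : Set M
  fK : M → M
  cond1 : (⊤ : M) ∈ BEL
  cond2 : ∀ m : M, fK m = ⊤ ↔ m ∈ BEL
  cond3 : ∀ m : M, m ≤ fK m
  cond4 : ∀ m m' : M, fK (m ⇨ m') ≤ fK m ⇨ fK m'
  cond5 : ∀ m m' : M, m ⊔ m' = ⊤ → m = ⊤ ∨ m' = ⊤

/-- An IEL-model is an IEL⁻-model additionally satisfying f_K(m) ≤ ¬¬m. -/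
def IsIELModel {M : Type} [HeytingAlgebra M] (Mo : IELModel M) : Prop :=
  ∀ m : M, Mo.fK m ≤ mᶜᶜ

/-- Canonical extension of an assignment `γ` of the variables to all formulas. -/
def IELModel.eval {M : Type} [HeytingAlgebra M] (Mo : IELModel M) (γ : ℕ → M) :
    FmE → M
  | .var n => γ n
  | .bot => ⊥
  | .and a b => Mo.eval γ a ⊓ Mo.eval γ b
  | .or a b => Mo.eval γ a ⊔ Mo.eval γ b
  | .imp a b => Mo.eval γ a ⇨ Mo.eval γ b
  | .k a => Mo.fK (Mo.eval γ a)

/-- Validity in all IEL⁻-models: γ(φ) = ⊤ under every assignment in every model. -/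
def ValidIELm (φ : FmE) : Prop :=
  ∀ (M : Type) [HeytingAlgebra M] (Mo : IELModel M) (γ : ℕ → M),
    Mo.eval γ φ = ⊤

/-- Validity in all IEL-models. -/
def ValidIEL (φ : FmE) : Prop :=
  ∀ (M : Type) [HeytingAlgebra M] (Mo : IELModel M), IsIELModel Mo →
    ∀ γ : ℕ → M, Mo.eval γ φ = ⊤

namespace IELProof
open FmE

/-- Derivability from a set of hypotheses. -/
inductive Deriv (b : Bool) (Γ : Set FmE) : FmE → Prop
  | hyp {φ} : φ ∈ Γ → Deriv b Γ φ
  | thm {φ} : IELThm b φ → Deriv b Γ φ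
  | mp {φ ψ} : Deriv b Γ (φ.imp ψ) → Deriv b Γ φ → Deriv b Γ ψ

theorem Deriv.dId {b Γ} {φ : FmE} : Deriv b Γ (φ.imp φ) :=
  .mp (.mp (.thm (.int (.s φ (φ.imp φ) φ))) (.thm (.int (.k φ (φ.imp φ)))))
    (.thm (.int (.k φ φ)))

theorem Deriv.h0 {b Γ} {φ : FmE} : Deriv b (insert φ Γ) φ := .hyp (Set.mem_insert _ _)

theorem Deriv.ded {b Γ} {φ ψ : FmE} (h : Deriv b (insert φ Γ) ψ) : Deriv b Γ (φ.imp ψ) := by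
  induction h with
  | hyp hm =>
    rw [Set.mem_insert_iff] at hm
    rcases hm with rfl | hm
    · exact .dId
    · exact .mp (.thm (.int (.k _ _))) (.hyp hm)
  | thm h => exact .mp (.thm (.int (.k _ _))) (.thm h)
  | mp _ _ ih1 ih2 => exact .mp (.mp (.thm (.int (.s _ _ _))) ih1) ih2

theorem Deriv.cut {b} {Γ Δ : Set FmE} (hd : ∀ χ ∈ Γ, Deriv b Δ χ) {φ}
    (h : Deriv b Γ φ) : Deriv b Δ φ := by
  induction h with
  | hyp hm => exact hd _ hm
  | thm h => exact .thm h
  | mp _ _ ih1 ih2 => exact .mp ih1 ih2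

theorem Deriv.directed {b} {c : Set (Set FmE)} (hchain : IsChain (· ⊆ ·) c)
    (hne : c.Nonempty) {ψ} (hd : Deriv b (⋃₀ c) ψ) : ∃ Γ ∈ c, Deriv b Γ ψ := by
  induction hd with
  | hyp hm =>
    obtain ⟨Γ, hΓ, hψ⟩ := hm
    exact ⟨Γ, hΓ, .hyp hψ⟩
  | thm h =>
    obtain ⟨Γ, hΓ⟩ := hne
    exact ⟨Γ, hΓ, .thm h⟩
  | mp _ _ ih1 ih2 =>
    obtain ⟨Γ1, h1, d1⟩ := ih1
    obtain ⟨Γ2, h2, d2⟩ := ih2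
    rcases eq_or_ne Γ1 Γ2 with rfl | hneq
    · exact ⟨Γ1, h1, .mp d1 d2⟩
    rcases hchain h1 h2 hneq with hsub | hsub
    · exact ⟨Γ2, h2, .mp (Deriv.cut (fun χ hχ => .hyp (hsub hχ)) d1) d2⟩
    · exact ⟨Γ1, h1, .mp d1 (Deriv.cut (fun χ hχ => .hyp (hsub hχ)) d2)⟩

/-- A prime theory. -/
structure Th (b : Bool) : Type where
  S : Set FmE
  closed : ∀ {ψ : FmE}, Deriv b S ψ → ψ ∈ S
  prime : ∀ {a c : FmE}, a.or c ∈ S → a ∈ S ∨ c ∈ S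

namespace Th

variable {b : Bool} (T : Th b)

theorem thm {φ : FmE} (h : IELThm b φ) : φ ∈ T.S := T.closed (.thm h)

theorem mp2 {φ ψ : FmE} (h1 : φ.imp ψ ∈ T.S) (h2 : φ ∈ T.S) : ψ ∈ T.S :=
  T.closed (.mp (.hyp h1) (.hyp h2))

theorem iId {φ : FmE} : φ.imp φ ∈ T.S := T.closed Deriv.dId

theorem itrans {a c d : FmE} (h1 : a.imp c ∈ T.S) (h2 : c.imp d ∈ T.S) :
    a.imp d ∈ T.S :=
  T.closed (Deriv.ded (.mp (.hyp (Set.mem_insert_of_mem _ h2))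
    (.mp (.hyp (Set.mem_insert_of_mem _ h1)) .h0)))

theorem ctop {a : FmE} : a.imp (FmE.bot.imp FmE.bot) ∈ T.S := T.closed (Deriv.ded .dId)

theorem cconst {a c : FmE} (h : c ∈ T.S) : a.imp c ∈ T.S :=
  T.closed (Deriv.ded (.hyp (Set.mem_insert_of_mem _ h)))

theorem cinf {a c d : FmE} (h1 : a.imp c ∈ T.S) (h2 : a.imp d ∈ T.S) :
    a.imp (c.and d) ∈ T.S :=
  T.closed (Deriv.ded (.mp (.mp (.thm (.int (.andIntro c d)))
    (.mp (.hyp (Set.mem_insert_of_mem _ h1)) .h0))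
    (.mp (.hyp (Set.mem_insert_of_mem _ h2)) .h0)))

theorem csup {a c d : FmE} (h1 : a.imp d ∈ T.S) (h2 : c.imp d ∈ T.S) :
    (a.or c).imp d ∈ T.S :=
  T.closed (.mp (.mp (.thm (.int (.orElim a c d))) (.hyp h1)) (.hyp h2))

theorem candCongr {a a' c c' : FmE} (h1 : a.imp a' ∈ T.S) (h2 : c.imp c' ∈ T.S) :
    (a.and c).imp (a'.and c') ∈ T.S :=
  T.cinf (T.itrans (T.thm (.int (.andLeft a c))) h1)
    (T.itrans (T.thm (.int (.andRight a c))) h2)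

theorem corCongr {a a' c c' : FmE} (h1 : a.imp a' ∈ T.S) (h2 : c.imp c' ∈ T.S) :
    (a.or c).imp (a'.or c') ∈ T.S :=
  T.csup (T.itrans h1 (T.thm (.int (.orInl a' c'))))
    (T.itrans h2 (T.thm (.int (.orInr a' c'))))

theorem cimpCongr {a a' c c' : FmE} (h1 : a'.imp a ∈ T.S) (h2 : c.imp c' ∈ T.S) :
    (a.imp c).imp (a'.imp c') ∈ T.S :=
  T.closed (Deriv.ded (Deriv.ded
    (.mp (.hyp (Set.mem_insert_of_mem _ (Set.mem_insert_of_mem _ h2)))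
      (.mp (.hyp (Set.mem_insert_of_mem _ (Set.mem_insert _ _)))
        (.mp (.hyp (Set.mem_insert_of_mem _ (Set.mem_insert_of_mem _ h1))) .h0)))))

theorem ckCongr {a a' : FmE} (h1 : a.imp a' ∈ T.S) : (a.k).imp (a'.k) ∈ T.S :=
  T.mp2 (T.thm (.dist b a a')) (T.mp2 (T.thm (.coref b (a.imp a'))) h1)

theorem ccurry {a c d : FmE} (h : (a.and c).imp d ∈ T.S) :
    a.imp (c.imp d) ∈ T.S :=
  T.closed (Deriv.ded (Deriv.ded
    (.mp (.hyp (Set.mem_insert_of_mem _ (Set.mem_insert_of_mem _ h)))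
      (.mp (.mp (.thm (.int (.andIntro a c)))
        (.hyp (Set.mem_insert_of_mem _ (Set.mem_insert _ _)))) .h0))))

theorem cuncurry {a c d : FmE} (h : a.imp (c.imp d) ∈ T.S) :
    (a.and c).imp d ∈ T.S :=
  T.closed (Deriv.ded
    (.mp (.mp (.hyp (Set.mem_insert_of_mem _ h))
        (.mp (.thm (.int (.andLeft a c))) .h0))
      (.mp (.thm (.int (.andRight a c))) .h0)))

/-- The Lindenbaum setoid of a prime theory. -/
def std : Setoid FmE where
  r a c := a.imp c ∈ T.S ∧ c.imp a ∈ T.S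
  iseqv := ⟨fun _ => ⟨T.iId, T.iId⟩, fun h => ⟨h.2, h.1⟩,
    fun h1 h2 => ⟨T.itrans h1.1 h2.1, T.itrans h2.2 h1.2⟩⟩

/-- The Lindenbaum quotient algebra. -/
def Q : Type := Quotient T.std

def lmk (φ : FmE) : T.Q := Quotient.mk T.std φ

def qand : T.Q → T.Q → T.Q :=
  Quotient.lift₂ (fun a c => T.lmk (a.and c)) fun _ _ _ _ h1 h2 =>
    Quotient.sound ⟨T.candCongr h1.1 h2.1, T.candCongr h1.2 h2.2⟩

def qor : T.Q → T.Q → T.Q :=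
  Quotient.lift₂ (fun a c => T.lmk (a.or c)) fun _ _ _ _ h1 h2 =>
    Quotient.sound ⟨T.corCongr h1.1 h2.1, T.corCongr h1.2 h2.2⟩

def qimp : T.Q → T.Q → T.Q :=
  Quotient.lift₂ (fun a c => T.lmk (a.imp c)) fun _ _ _ _ h1 h2 =>
    Quotient.sound ⟨T.cimpCongr h1.2 h2.1, T.cimpCongr h1.1 h2.2⟩

def qk : T.Q → T.Q :=
  Quotient.lift (fun a => T.lmk (a.k)) fun _ _ h =>
    Quotient.sound ⟨T.ckCongr h.1, T.ckCongr h.2⟩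

def qle : T.Q → T.Q → Prop :=
  Quotient.lift₂ (fun a c => a.imp c ∈ T.S) fun _ _ _ _ h1 h2 =>
    propext ⟨fun h => T.itrans h1.2 (T.itrans h h2.1),
      fun h => T.itrans h1.1 (T.itrans h h2.2)⟩

instance instLat : Lattice T.Q where
  le := T.qle
  sup := T.qor
  inf := T.qand
  le_refl := by rintro ⟨a⟩; exact T.iId
  le_trans := by rintro ⟨a⟩ ⟨c⟩ ⟨d⟩ h1 h2; exact T.itrans h1 h2
  le_antisymm := by rintro ⟨a⟩ ⟨c⟩ h1 h2; exact Quotient.sound ⟨h1, h2⟩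
  le_sup_left := by rintro ⟨a⟩ ⟨c⟩; exact T.thm (.int (.orInl a c))
  le_sup_right := by rintro ⟨a⟩ ⟨c⟩; exact T.thm (.int (.orInr a c))
  sup_le := by rintro ⟨a⟩ ⟨c⟩ ⟨d⟩ h1 h2; exact T.csup h1 h2
  inf_le_left := by rintro ⟨a⟩ ⟨c⟩; exact T.thm (.int (.andLeft a c))
  inf_le_right := by rintro ⟨a⟩ ⟨c⟩; exact T.thm (.int (.andRight a c))
  le_inf := by rintro ⟨a⟩ ⟨c⟩ ⟨d⟩ h1 h2; exact T.cinf h1 h2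

instance instHImp : HImp T.Q := ⟨T.qimp⟩

instance instOrderTop : OrderTop T.Q where
  top := T.lmk (FmE.bot.imp FmE.bot)
  le_top := by rintro ⟨a⟩; exact T.ctop

instance instOrderBot : OrderBot T.Q where
  bot := T.lmk FmE.bot
  bot_le := by rintro ⟨a⟩; exact T.thm (.int (.exfalso a))

instance instCompl : HasCompl T.Q := ⟨fun x => x ⇨ T.lmk FmE.bot⟩

instance instGHA : GeneralizedHeytingAlgebra T.Q where
  le_himp_iff := by
    rintro ⟨a⟩ ⟨c⟩ ⟨d⟩
    exact ⟨fun h => T.cuncurry h, fun h => T.ccurry h⟩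

instance instHA : HeytingAlgebra T.Q where
  compl x := x ⇨ T.lmk FmE.bot
  himp_bot _ := rfl

theorem lmk_le_lmk {a c : FmE} : T.lmk a ≤ T.lmk c ↔ a.imp c ∈ T.S := Iff.rfl

theorem lmk_eq_top {a : FmE} : T.lmk a = ⊤ ↔ a ∈ T.S := by
  constructor
  · intro h
    have h2 := (@Quotient.exact _ T.std _ _ h).2
    exact T.mp2 h2 T.iId
  · intro h
    exact Quotient.sound ⟨T.ctop, T.cconst h⟩

/-- The canonical model over the Lindenbaum quotient. -/
def model : IELModel T.Q where
  BEL := {m | T.qk m = ⊤}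
  fK := T.qk
  cond1 := by
    show T.qk _ = ⊤
    exact T.lmk_eq_top.mpr (T.mp2 (T.thm (.coref b _)) T.iId)
  cond2 _ := Iff.rfl
  cond3 := by rintro ⟨a⟩; exact T.thm (.coref b a)
  cond4 := by rintro ⟨a⟩ ⟨c⟩; exact T.thm (.dist b a c)
  cond5 := by
    rintro ⟨a⟩ ⟨c⟩ h
    have : T.lmk (a.or c) = ⊤ := h
    rcases T.prime (T.lmk_eq_top.mp this) with h' | h'
    · exact Or.inl (T.lmk_eq_top.mpr h')
    · exact Or.inr (T.lmk_eq_top.mpr h')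

theorem isIEL (T : Th true) : IsIELModel T.model := by
  rintro ⟨a⟩
  exact T.thm (.intref a)

theorem eval_mk (ψ : FmE) :
    T.model.eval (fun n => T.lmk (.var n)) ψ = T.lmk ψ := by
  induction ψ with
  | var n => rfl
  | bot => rfl
  | and a c iha ihc => show T.model.eval _ a ⊓ T.model.eval _ c = _; rw [iha, ihc]; rfl
  | or a c iha ihc => show T.model.eval _ a ⊔ T.model.eval _ c = _; rw [iha, ihc]; rfl
  | imp a c iha ihc => show T.model.eval _ a ⇨ T.model.eval _ c = _; rw [iha, ihc]; rfl
  | k a iha => show T.model.fK (T.model.eval _ a) = _; rw [iha]; rfl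

end Th

/-- Lindenbaum-style existence of a prime theory avoiding an unprovable formula. -/
theorem exists_th (b : Bool) {φ : FmE} (h : ¬ IELThm b φ) : ∃ T : Th b, φ ∉ T.S := by
  classical
  set S : Set (Set FmE) := {Γ | (∀ ψ, Deriv b Γ ψ → ψ ∈ Γ) ∧ φ ∉ Γ} with hS
  have hbase : {ψ | IELThm b ψ} ∈ S := by
    constructor
    · intro ψ hd
      induction hd with
      | hyp hm => exact hm
      | thm h => exact h
      | mp _ _ ih1 ih2 => exact .mp ih1 ih2
    · exact h
  have hzorn : ∀ c ⊆ S, IsChain (· ⊆ ·) c → c.Nonempty → ∃ ub ∈ S, ∀ s ∈ c, s ⊆ ub := by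
    intro c hcS hchain hne
    refine ⟨⋃₀ c, ⟨?_, ?_⟩, fun s hs => Set.subset_sUnion_of_mem hs⟩
    · intro ψ hd
      obtain ⟨Γ, hΓ, hd'⟩ := Deriv.directed hchain hne hd
      exact Set.mem_sUnion.mpr ⟨Γ, hΓ, (hcS hΓ).1 ψ hd'⟩
    · rintro ⟨Γ, hΓ, hφ⟩
      exact (hcS hΓ).2 hφ
  obtain ⟨m, -, hm⟩ := zorn_subset_nonempty S hzorn _ hbase
  have hmS := hm.prop
  have hclosed : ∀ {ψ}, Deriv b m ψ → ψ ∈ m := fun hd => hmS.1 _ hd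
  have hprime : ∀ {a c : FmE}, a.or c ∈ m → a ∈ m ∨ c ∈ m := by
    intro a c hac
    by_contra hcon
    push_neg at hcon
    obtain ⟨ha, hc⟩ := hcon
    have key : ∀ d : FmE, d ∉ m → d.imp φ ∈ m := by
      intro d hd
      have hder : Deriv b (insert d m) φ := by
        by_contra hnd
        have hin : {ψ | Deriv b (insert d m) ψ} ∈ S := by
          constructor
          · intro ψ h'
            exact Deriv.cut (fun χ hχ => hχ) h'
          · exact hnd
        have hsub : m ⊆ {ψ | Deriv b (insert d m) ψ} :=
          fun ψ hψ => .hyp (Set.mem_insert_of_mem _ hψ)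
        have := hm.2 hin hsub
        exact hd (this (Deriv.h0))
      exact hclosed hder.ded
    have hφm : φ ∈ m :=
      hclosed (.mp (.mp (.mp (.thm (.int (.orElim a c φ)))
        (.hyp (key a ha))) (.hyp (key c hc))) (.hyp hac))
    exact hmS.2 hφm
  exact ⟨⟨m, hclosed, hprime⟩, hmS.2⟩

end IELProof

namespace IELProof

theorem sound {b : Bool} {φ : FmE} (h : IELThm b φ) {M : Type} [HeytingAlgebra M]
    (Mo : IELModel M) (hb : b = true → IsIELModel Mo) (γ : ℕ → M) :
    Mo.eval γ φ = ⊤ := by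
  induction h with
  | int hax =>
    cases hax with
    | k ψ χ =>
      simp only [IELModel.eval, himp_eq_top_iff, le_himp_iff]
      exact inf_le_left
    | s ψ χ ρ =>
      simp only [IELModel.eval, himp_eq_top_iff, le_himp_iff]
      set x := Mo.eval γ ψ; set y := Mo.eval γ χ; set z := Mo.eval γ ρ
      have h1 : (x ⇨ (y ⇨ z)) ⊓ (x ⇨ y) ⊓ x ≤ y ⇨ z :=
        le_trans (inf_le_inf_right _ inf_le_left) himp_inf_le
      have h2 : (x ⇨ (y ⇨ z)) ⊓ (x ⇨ y) ⊓ x ≤ y :=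
        le_trans (inf_le_inf_right _ inf_le_right) himp_inf_le
      exact le_trans (le_inf h1 h2) himp_inf_le
    | andIntro ψ χ =>
      simp only [IELModel.eval, himp_eq_top_iff, le_himp_iff]
      exact le_refl _
    | andLeft ψ χ =>
      simp only [IELModel.eval, himp_eq_top_iff]
      exact inf_le_left
    | andRight ψ χ =>
      simp only [IELModel.eval, himp_eq_top_iff]
      exact inf_le_right
    | orInl ψ χ =>
      simp only [IELModel.eval, himp_eq_top_iff]
      exact le_sup_left
    | orInr ψ χ =>
      simp only [IELModel.eval, himp_eq_top_iff]
      exact le_sup_right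
    | orElim ψ χ ρ =>
      simp only [IELModel.eval, himp_eq_top_iff, le_himp_iff]
      set x := Mo.eval γ ψ; set y := Mo.eval γ χ; set z := Mo.eval γ ρ
      rw [inf_sup_left]
      refine sup_le ?_ ?_
      · exact le_trans (inf_le_inf_right _ inf_le_left) himp_inf_le
      · exact le_trans (inf_le_inf_right _ inf_le_right) himp_inf_le
    | exfalso ψ =>
      simp only [IELModel.eval, himp_eq_top_iff]
      exact bot_le
  | dist full ψ χ =>
    simp only [IELModel.eval, himp_eq_top_iff]
    exact le_himp_iff.mpr (le_trans (inf_le_inf_right _ (Mo.cond4 _ _)) himp_inf_le)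
  | coref full ψ =>
    simp only [IELModel.eval, himp_eq_top_iff]
    exact Mo.cond3 _
  | intref ψ =>
    simp only [FmE.neg, IELModel.eval, himp_eq_top_iff, himp_bot]
    exact hb rfl _
  | mp _ _ ih1 ih2 =>
    have h1 := ih1 hb
    have h2 := ih2 hb
    simp only [IELModel.eval, himp_eq_top_iff] at h1
    rw [eq_top_iff, ← h2]
    exact h1

end IELProof

/-- algebraic soundness and completeness of IEL⁻ and IEL. -/
theorem stmt_19 (φ : FmE) :
    (IELThm false φ ↔ ValidIELm φ) ∧ (IELThm true φ ↔ ValidIEL φ) := by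
  constructor
  · constructor
    · intro h M _ Mo γ
      exact IELProof.sound h Mo (fun hc => absurd hc (by simp)) γ
    · intro hv
      by_contra h
      obtain ⟨T, hT⟩ := IELProof.exists_th false h
      have := hv T.Q T.model (fun n => T.lmk (.var n))
      rw [T.eval_mk] at this
      exact hT (T.lmk_eq_top.mp this)
  · constructor
    · intro h M _ Mo hMo γ
      exact IELProof.sound h Mo (fun _ => hMo) γ
    · intro hv
      by_contra h
      obtain ⟨T, hT⟩ := IELProof.exists_th true h
      have := hv T.Q T.model T.isIEL (fun n => T.lmk (.var n))
      rw [T.eval_mk] at this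
      exact hT (T.lmk_eq_top.mp this)
end
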